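/- For all natural numbers m, n, p, k with p ≤ n ≤ m and m − p ≤ k ≤ m + n − 2p, the following identity holds in K: v^{p(p−1) − m(m+n−p−k)} · ∑_{l=0}^{p} (−1)^l · v^{l(1 + m + n − 2p − k)} · [n−p+l choose l] · [p+k−m choose p−l] = (−1)^p · v^{(p−m)(m+n) + mk} · [m+n−p−k choose p]. -/

import Mathlib

open PowerSeries Finset

noncomputable section

/-- The base field `K = ℚ(v)`. -/
abbrev K : Type := RatFunc ℚ

/-- The indeterminate `v` of `K = ℚ(v)`. -/
noncomputable def v : K := RatFunc.X

/-- The quantum integer `[m] = (v^m - v^{-m})/(v - v⁻¹)`. -/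
noncomputable def qint (m : ℤ) : K := (v ^ m - v ^ (-m)) / (v - v⁻¹)

/-- The quantum factorial `[n]! = [n][n-1]⋯[1]`. -/
noncomputable def qfact (n : ℕ) : K := ∏ i ∈ Finset.range n, qint (i + 1)

/-- The quantum binomial coefficient `[m choose n]`. -/
noncomputable def qbinom (m n : ℤ) : K :=
  if 0 ≤ n ∧ n ≤ m then qfact m.toNat / (qfact n.toNat * qfact (m - n).toNat) else 0

/-- The ring `R = K[[X]]`. -/
abbrev R : Type := PowerSeries K

/-- `T = 1 + X`, a unit of `R`. -/
noncomputable def T : R := 1 + PowerSeries.X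

/-- `T⁻¹`, the inverse of the unit `T` in `R`. -/
noncomputable def Tinv : R := Ring.inverse T

/-- `[T;r] = (v^r T - v^{-r} T⁻¹)/(v - v⁻¹)`. -/
noncomputable def bT (r : ℤ) : R :=
  PowerSeries.C (R := K) ((v - v⁻¹)⁻¹) *
    (PowerSeries.C (R := K) (v ^ r) * T - PowerSeries.C (R := K) (v ^ (-r)) * Tinv)

/-- `[T⁻¹;r] = (v^r T⁻¹ - v^{-r} T)/(v - v⁻¹)`. -/
noncomputable def bTinv (r : ℤ) : R :=
  PowerSeries.C (R := K) ((v - v⁻¹)⁻¹) *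
    (PowerSeries.C (R := K) (v ^ r) * Tinv - PowerSeries.C (R := K) (v ^ (-r)) * T)

/-- `[T;r]_{(j)} = [T;r][T;r-1]⋯[T;r-j+1]`. -/
noncomputable def bTdesc (r : ℤ) (j : ℕ) : R := ∏ i ∈ Finset.range j, bT (r - i)

/-- `[T;r]^{(j)} = [T;r+1][T;r+2]⋯[T;r+j]`. -/
noncomputable def bTasc (r : ℤ) (j : ℕ) : R := ∏ i ∈ Finset.range j, bT (r + 1 + i)

/-- `[T⁻¹;r]_{(j)} = [T⁻¹;r][T⁻¹;r-1]⋯[T⁻¹;r-j+1]`. -/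
noncomputable def bTinvDesc (r : ℤ) (j : ℕ) : R := ∏ i ∈ Finset.range j, bTinv (r - i)

lemma v_ne : v ≠ 0 := RatFunc.X_ne_zero

lemma vpow_ne_one (j : ℤ) (hj : j ≠ 0) : v ^ j ≠ 1 := by
  have key : ∀ n : ℕ, n ≠ 0 → v ^ (n:ℤ) ≠ 1 := by
    intro n hn h
    rw [zpow_natCast] at h
    have h2 : (Polynomial.X : Polynomial ℚ) ^ n = 1 := by
      apply RatFunc.algebraMap_injective ℚ
      rw [map_pow, map_one, RatFunc.algebraMap_X]
      exact h
    have := congrArg Polynomial.natDegree h2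
    simp [Polynomial.natDegree_X_pow] at this
    exact hn this
  rcases lt_trichotomy j 0 with h | h | h
  · intro hcon
    have : v ^ (-j) = 1 := by
      rw [zpow_neg, hcon, inv_one]
    exact key (-j).toNat (by omega) (by rwa [Int.toNat_of_nonneg (by omega)]) 
  · exact absurd h hj
  · intro hcon
    exact key j.toNat (by omega) (by rwa [Int.toNat_of_nonneg (by omega)]) 

lemma vsub_ne : v - v⁻¹ ≠ 0 := by
  intro h
  have h1 : v * v = 1 := by
    have h' := sub_eq_zero.mp h
    nth_rewrite 2 [h']
    exact mul_inv_cancel₀ v_ne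
  have := vpow_ne_one 2 (by norm_num)
  rw [zpow_two] at this
  exact this h1

lemma qint_ne_zero (m : ℤ) (hm : m ≠ 0) : qint m ≠ 0 := by
  unfold qint
  apply div_ne_zero _ vsub_ne
  intro h
  have h1 : v ^ m = v ^ (-m) := sub_eq_zero.mp h
  have h2 : v ^ (2*m) = 1 := by
    have := congrArg (· * v ^ m) h1
    simp only [← zpow_add₀ v_ne] at this
    simpa [two_mul] using this
  exact vpow_ne_one (2*m) (by omega) h2

lemma qfact_ne_zero (n : ℕ) : qfact n ≠ 0 := by
  unfold qfact
  apply Finset.prod_ne_zero_iff.mpr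
  intro i _
  exact qint_ne_zero _ (by omega)

lemma qint_zero : qint 0 = 0 := by simp [qint]

lemma qint_neg (m : ℤ) : qint (-m) = - qint m := by
  unfold qint
  rw [neg_neg, ← neg_div, neg_sub]

lemma qint_add (a b : ℤ) : qint (a + b) = v ^ a * qint b + v ^ (-b) * qint a := by
  unfold qint
  rw [mul_div_assoc', mul_div_assoc', ← add_div]
  congr 1
  rw [mul_sub, mul_sub, ← zpow_add₀ v_ne, ← zpow_add₀ v_ne, ← zpow_add₀ v_ne, ← zpow_add₀ v_ne,
    show a + -b = -b + a by ring, show -(a+b) = -b + -a by ring]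
  ring

noncomputable def gbinom (x : ℤ) (l : ℕ) : K :=
  (∏ i ∈ Finset.range l, qint (x - i)) / qfact l

lemma qfact_succ (n : ℕ) : qfact (n + 1) = qfact n * qint (n + 1) :=
  Finset.prod_range_succ _ n

lemma gbinom_zero (x : ℤ) : gbinom x 0 = 1 := by simp [gbinom, qfact]

lemma gbinom_zero_top (l : ℕ) (hl : l ≠ 0) : gbinom (0:ℤ) l = 0 := by
  unfold gbinom
  rw [Finset.prod_eq_zero (Finset.mem_range.mpr (Nat.pos_of_ne_zero hl))
    (by simpa using qint_zero), zero_div]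

lemma gbinom_neg (a : ℤ) (l : ℕ) : gbinom (-a - 1) l = (-1:K)^l * gbinom (a + l) l := by
  unfold gbinom
  rw [mul_div_assoc']
  congr 1
  have h1 : ∏ i ∈ Finset.range l, qint (-a - 1 - i)
      = (-1:K)^l * ∏ i ∈ Finset.range l, qint (a + 1 + i) := by
    have e : ∏ i ∈ Finset.range l, qint (-a - 1 - i)
        = ∏ i ∈ Finset.range l, (-1 : K) * qint (a + 1 + i) :=
      Finset.prod_congr rfl (fun i _ => by rw [neg_one_mul, ← qint_neg]; congr 1; ring)
    rw [e, Finset.prod_mul_distrib, Finset.prod_const, Finset.card_range]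
  have h2 : ∏ i ∈ Finset.range l, qint (a + 1 + i)
      = ∏ i ∈ Finset.range l, qint (a + l - i) := by
    rw [← Finset.prod_range_reflect (fun i => qint (a + l - i)) l]
    apply Finset.prod_congr rfl
    intro j hj
    have := Finset.mem_range.mp hj
    congr 1
    rw [show l - 1 - j = l - (j + 1) by omega, Nat.cast_sub (by omega : j + 1 ≤ l)]
    push_cast
    ring
  rw [h1, h2]

lemma qfact_eq (M N : ℕ) (h : N ≤ M) :
    qfact M = (∏ i ∈ Finset.range N, qint ((M:ℤ) - i)) * qfact (M - N) := by
  induction N with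
  | zero => simp
  | succ N ih =>
    have hN : N ≤ M := by omega
    rw [ih hN, Finset.prod_range_succ]
    have h1 : M - N = (M - (N+1)) + 1 := by omega
    rw [h1, qfact_succ]
    have h2 : qint ((↑(M - (N+1)) : ℤ) + 1) = qint ((M:ℤ) - N) := by
      congr 1; push_cast [Nat.cast_sub (by omega : N + 1 ≤ M)]; ring
    rw [h2]; ring

lemma qbinom_eq (M N : ℕ) : qbinom (M:ℤ) (N:ℤ) = gbinom (M:ℤ) N := by
  by_cases h : N ≤ M
  · rw [qbinom, if_pos ⟨by positivity, by exact_mod_cast h⟩]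
    unfold gbinom
    rw [show ((M:ℤ) - N).toNat = M - N by omega, Int.toNat_natCast, Int.toNat_natCast]
    rw [div_eq_div_iff (mul_ne_zero (qfact_ne_zero N) (qfact_ne_zero (M - N)))
      (qfact_ne_zero N), qfact_eq M N h]
    ring
  · rw [qbinom, if_neg (by push_neg; intro _; exact_mod_cast by omega : ¬_)]
    unfold gbinom
    rw [Finset.prod_eq_zero (Finset.mem_range.mpr (by omega : M < N))
      (by rw [sub_self]; exact qint_zero), zero_div]

lemma pascal (x : ℤ) (l : ℕ) :
    gbinom x (l+1)
      = v ^ ((l:ℤ)+1) * gbinom (x-1) (l+1) + v ^ ((l:ℤ)+1-x) * gbinom (x-1) l := by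
  have hQ : qint ((l:ℤ)+1) ≠ 0 := qint_ne_zero _ (by omega)
  have hF := qfact_ne_zero l
  have h1 : ∏ i ∈ Finset.range (l+1), qint (x - i)
      = (∏ i ∈ Finset.range l, qint (x - 1 - i)) * qint x := by
    rw [Finset.prod_range_succ']
    congr 1
    · exact Finset.prod_congr rfl fun i _ => by congr 1; push_cast; ring
    · congr 1; push_cast; ring
  have h2 : ∏ i ∈ Finset.range (l+1), qint (x - 1 - i)
      = (∏ i ∈ Finset.range l, qint (x - 1 - i)) * qint (x - 1 - l) :=
    Finset.prod_range_succ _ l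
  have hx : qint x = v ^ ((l:ℤ)+1) * qint (x - 1 - l) + v ^ ((l:ℤ)+1-x) * qint ((l:ℤ)+1) := by
    have h := qint_add ((l:ℤ)+1) (x - ((l:ℤ)+1))
    rw [show ((l:ℤ)+1) + (x - ((l:ℤ)+1)) = x by ring] at h
    rw [h]
    congr 2 <;> ring
  unfold gbinom
  rw [h1, h2, qfact_succ, hx]
  field_simp

lemma vpow_helper {a b c d : ℤ} (h : a + b = c + d) (G H : K) :
    v ^ a * (v ^ b * G) * H = v ^ c * (v ^ d * G * H) := by
  have hv : v ^ a * v ^ b = v ^ c * v ^ d := by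
    rw [← zpow_add₀ v_ne, ← zpow_add₀ v_ne, h]
  linear_combination G * H * hv

noncomputable def S (p : ℕ) (x y : ℤ) : K :=
  ∑ l ∈ Finset.range (p+1), v ^ (x * ((p:ℤ) - l) - y * l) * gbinom x l * gbinom y (p - l)

lemma S_rec (p : ℕ) (x y : ℤ) :
    S (p+1) x y = v ^ ((p:ℤ)+1) * S (p+1) (x-1) y + v ^ ((p:ℤ)+1-x-y) * S p (x-1) y := by
  unfold S
  rw [Finset.mul_sum, Finset.mul_sum]
  rw [Finset.sum_range_succ'
    (fun l => v ^ (x * ((↑(p+1):ℤ) - l) - y * l) * gbinom x l * gbinom y (p+1 - l)) (p+1)]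
  rw [Finset.sum_range_succ'
    (fun l => v ^ ((p:ℤ)+1) * (v ^ ((x-1) * ((↑(p+1):ℤ) - l) - y * l) * gbinom (x-1) l
      * gbinom y (p+1 - l))) (p+1)]
  have h0 : v ^ (x * ((↑(p+1):ℤ) - (0:ℕ)) - y * (0:ℕ)) * gbinom x 0 * gbinom y (p+1-0)
      = v ^ ((p:ℤ)+1) * (v ^ ((x-1) * ((↑(p+1):ℤ) - (0:ℕ)) - y * (0:ℕ)) * gbinom (x-1) 0
        * gbinom y (p+1-0)) := by
    rw [gbinom_zero, gbinom_zero, mul_one, mul_one, ← mul_assoc, ← zpow_add₀ v_ne]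
    congr 2
    push_cast
    ring
  have hterm : ∀ l ∈ Finset.range (p+1),
      v ^ (x * ((↑(p+1):ℤ) - ↑(l+1)) - y * ↑(l+1)) * gbinom x (l+1) * gbinom y (p+1-(l+1))
      = v ^ ((p:ℤ)+1) * (v ^ ((x-1) * ((↑(p+1):ℤ) - ↑(l+1)) - y * ↑(l+1)) * gbinom (x-1) (l+1)
          * gbinom y (p+1-(l+1)))
        + v ^ ((p:ℤ)+1-x-y) * (v ^ ((x-1) * ((p:ℤ) - l) - y * l) * gbinom (x-1) l
          * gbinom y (p - l)) := by
    intro l hl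
    have hsub : p + 1 - (l + 1) = p - l := by omega
    rw [pascal x l, hsub, mul_add, add_mul]
    congr 1
    · exact vpow_helper (by push_cast; ring) _ _
    · exact vpow_helper (by push_cast; ring) _ _
  rw [Finset.sum_congr rfl hterm, Finset.sum_add_distrib, h0]
  ring

lemma vander (p : ℕ) : ∀ x y : ℤ, S p x y = gbinom (x + y) p := by
  induction p with
  | zero => intro x y; simp [S, gbinom_zero]
  | succ p ih =>
    have base : ∀ y : ℤ, S (p+1) 0 y = gbinom y (p+1) := by
      intro y
      unfold S
      rw [Finset.sum_eq_single 0]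
      · simp [gbinom_zero]
      · intro l hl hne
        rw [gbinom_zero_top l hne]
        ring
      · intro h
        exact absurd (Finset.mem_range.mpr (by omega)) h
    intro x
    induction x using Int.induction_on with
    | zero => intro y; rw [base, zero_add]
    | succ i ihx =>
      intro y
      have hr := S_rec p ((i:ℤ)+1) y
      rw [show ((i:ℤ)+1) - 1 = (i:ℤ) by ring] at hr
      rw [hr, ihx y, ih (i:ℤ) y]
      have hpas := pascal ((i:ℤ)+1+y) p
      rw [show ((i:ℤ)+1+y) - 1 = (i:ℤ) + y by ring,
        show (p:ℤ)+1-((i:ℤ)+1+y) = (p:ℤ)+1-((i:ℤ)+1)-y by ring] at hpas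
      exact hpas.symm
    | pred i ihx =>
      intro y
      have hr := S_rec p (-(i:ℤ)) y
      rw [ihx y, ih (-(i:ℤ) - 1) y] at hr
      have hpas := pascal (-(i:ℤ) + y) p
      rw [show (-(i:ℤ) + y) - 1 = (-(i:ℤ) - 1) + y by ring,
        show (p:ℤ)+1-(-(i:ℤ)+y) = (p:ℤ)+1-(-(i:ℤ))-y by ring] at hpas
      have hc := hr.symm.trans hpas
      exact mul_left_cancel₀ (zpow_ne_zero _ v_ne) (add_right_cancel hc)


/-- the Clebsch-Gordan coefficient identity of Lemma `CGspecialcase`. -/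
theorem stmt8 (m n p k : ℕ) (hpn : p ≤ n) (hnm : n ≤ m)
    (hk1 : (m : ℤ) - p ≤ k) (hk2 : (k : ℤ) ≤ (m : ℤ) + n - 2 * p) :
    v ^ ((p : ℤ) * ((p : ℤ) - 1) - (m : ℤ) * ((m : ℤ) + n - p - k)) *
        ∑ l ∈ Finset.range (p + 1),
          (-1 : K) ^ l * v ^ ((l : ℤ) * (1 + (m : ℤ) + n - 2 * p - k)) *
            qbinom ((n : ℤ) - p + l) l * qbinom ((p : ℤ) + k - m) ((p : ℤ) - l) =
      (-1 : K) ^ p * v ^ (((p : ℤ) - m) * ((m : ℤ) + n) + (m : ℤ) * k) *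
        qbinom ((m : ℤ) + n - p - k) p := by
  have hterm : ∀ l ∈ Finset.range (p + 1),
      (-1 : K) ^ l * v ^ ((l : ℤ) * (1 + (m : ℤ) + n - 2 * p - k)) *
          qbinom ((n : ℤ) - p + l) l * qbinom ((p : ℤ) + k - m) ((p : ℤ) - l)
      = v ^ (-(((p:ℤ) - n - 1) * p)) *
          (v ^ (((p:ℤ) - n - 1) * ((p:ℤ) - l) - ((p:ℤ) + k - m) * l) *
            gbinom ((p:ℤ) - n - 1) l * gbinom ((p:ℤ) + k - m) (p - l)) := by
    intro l hl
    have hlp : l ≤ p := by have := Finset.mem_range.mp hl; omega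
    have c1 : qbinom ((n : ℤ) - p + l) l = gbinom ((n : ℤ) - p + l) l := by
      have h' : (n:ℤ) - p + l = ((n - p + l : ℕ) : ℤ) := by omega
      rw [h', qbinom_eq, ← h']
    have c2 : qbinom ((p : ℤ) + k - m) ((p : ℤ) - l)
        = gbinom ((p : ℤ) + k - m) (p - l) := by
      have h1 : (p:ℤ) + k - m = ((p + k - m : ℕ) : ℤ) := by omega
      have h2 : (p:ℤ) - l = ((p - l : ℕ) : ℤ) := by omega
      rw [h1, h2, qbinom_eq, ← h1]
    have c3 : (-1:K) ^ l * gbinom ((n : ℤ) - p + l) l = gbinom ((p:ℤ) - n - 1) l := by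
      have h := gbinom_neg ((n:ℤ) - p) l
      rw [show -((n:ℤ) - p) - 1 = (p:ℤ) - n - 1 by ring] at h
      exact h.symm
    have hv : v ^ ((l : ℤ) * (1 + (m : ℤ) + n - 2 * p - k))
        = v ^ (-(((p:ℤ) - n - 1) * p))
          * v ^ (((p:ℤ) - n - 1) * ((p:ℤ) - l) - ((p:ℤ) + k - m) * l) := by
      rw [← zpow_add₀ v_ne]
      congr 1
      ring
    rw [c1, c2]
    linear_combination ((-1:K)^l * gbinom ((n : ℤ) - p + l) l
        * gbinom ((p:ℤ) + k - m) (p - l)) * hv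
      + (v ^ (-(((p:ℤ) - n - 1) * p))
          * v ^ (((p:ℤ) - n - 1) * ((p:ℤ) - l) - ((p:ℤ) + k - m) * l)
          * gbinom ((p:ℤ) + k - m) (p - l)) * c3
  rw [Finset.sum_congr rfl hterm, ← Finset.mul_sum]
  have hS : ∑ l ∈ Finset.range (p + 1),
      v ^ (((p:ℤ) - n - 1) * ((p:ℤ) - l) - ((p:ℤ) + k - m) * l) *
        gbinom ((p:ℤ) - n - 1) l * gbinom ((p:ℤ) + k - m) (p - l)
      = S p ((p:ℤ) - n - 1) ((p:ℤ) + k - m) := rfl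
  rw [hS, vander p]
  obtain ⟨C, hC⟩ : ∃ C : ℕ, (C : ℤ) = (m:ℤ) + n - p - k := ⟨(m + n - p - k : ℕ), by omega⟩
  rw [show ((p:ℤ) - n - 1) + ((p:ℤ) + k - m) = -((C:ℤ) - p) - 1 by omega, gbinom_neg,
    show ((C:ℤ) - p + p) = (C:ℤ) by ring, show (m:ℤ) + n - p - k = (C:ℤ) from hC.symm,
    show (p:ℤ) = ((p:ℕ):ℤ) from rfl, qbinom_eq]
  have hv2 : v ^ ((p : ℤ) * ((p : ℤ) - 1) - (m : ℤ) * C)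
        * v ^ (-(((p:ℤ) - n - 1) * p))
      = v ^ (((p : ℤ) - m) * ((m : ℤ) + n) + (m : ℤ) * k) := by
    rw [← zpow_add₀ v_ne]
    congr 1
    rw [hC]
    ring
  linear_combination ((-1:K)^p * gbinom (C:ℤ) p) * hv2
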